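/- (Matrix BNP lemma, high-dimensional Fourier mass) Let G be a finite group and f, g : G → M_t(ℂ). For any D ≥ 1, let T be the set of irreducible representations of G of dimension at least D. Then Σ_{ρ∈T} d_ρ ‖(f*g)^(ρ)‖²_HS ≤ (1/D) ‖f‖₂² ‖g‖₂², where ‖f‖₂² = E_x[‖f(x)‖²_HS]. -/

import Mathlib

open scoped Kronecker ComplexOrder
open Finset Matrix

attribute [local instance] Classical.propDecidable

noncomputable section

def hsNormSq {m n : Type*} [Fintype m] [Fintype n] (A : Matrix m n ℂ) : ℝ :=
  ∑ i, ∑ j, Complex.normSq (A i j)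

def vnorm {n : ℕ} (u : Fin n → ℂ) : ℝ := Real.sqrt (∑ i, Complex.normSq (u i))

def opNorm {d : ℕ} (M : Matrix (Fin d) (Fin d) ℂ) : ℝ :=
  ‖Matrix.toEuclideanCLM (𝕜 := ℂ) M‖

def traceNorm {m : Type*} [Fintype m] [DecidableEq m] (A : Matrix m m ℂ) : ℝ :=
  (((Matrix.posSemidef_conjTranspose_mul_self A).1.eigenvectorUnitary : Matrix m m ℂ) *
      diagonal ((fun r : ℝ => (r : ℂ)) ∘ (√·) ∘ (Matrix.posSemidef_conjTranspose_mul_self A).1.eigenvalues) *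
      (star (Matrix.posSemidef_conjTranspose_mul_self A).1.eigenvectorUnitary : Matrix m m ℂ)).trace.re

variable {G : Type*} [Group G] [Fintype G]

def conv {t : ℕ} (f g : G → Matrix (Fin t) (Fin t) ℂ) (x : G) : Matrix (Fin t) (Fin t) ℂ :=
  (Fintype.card G : ℂ)⁻¹ • ∑ y, f (x * y⁻¹) * g y

def adjFun {t : ℕ} (f : G → Matrix (Fin t) (Fin t) ℂ) (x : G) : Matrix (Fin t) (Fin t) ℂ :=
  (f x⁻¹)ᴴ

def fourierMat {t d : ℕ} (f : G → Matrix (Fin t) (Fin t) ℂ)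
    (ρ : G →* Matrix.unitaryGroup (Fin d) ℂ) : Matrix (Fin t × Fin d) (Fin t × Fin d) ℂ :=
  (Fintype.card G : ℂ)⁻¹ • ∑ x, (f x) ⊗ₖ (ρ x : Matrix (Fin d) (Fin d) ℂ)

def l2sq {t : ℕ} (f : G → Matrix (Fin t) (Fin t) ℂ) : ℝ :=
  (Fintype.card G : ℝ)⁻¹ * ∑ x, hsNormSq (f x)

def u2pow4 {t : ℕ} (f : G → Matrix (Fin t) (Fin t) ℂ) : ℝ := l2sq (conv (adjFun f) f)

def IsIrred {d : ℕ} (ρ : G →* Matrix.unitaryGroup (Fin d) ℂ) : Prop :=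
  ∀ M : Matrix (Fin d) (Fin d) ℂ,
    (∀ g, (ρ g : Matrix (Fin d) (Fin d) ℂ) * M = M * (ρ g : Matrix (Fin d) (Fin d) ℂ)) →
    ∃ c : ℂ, M = c • (1 : Matrix (Fin d) (Fin d) ℂ)

def IsNontrivialRep {d : ℕ} (ρ : G →* Matrix.unitaryGroup (Fin d) ℂ) : Prop :=
  ∃ g, (ρ g : Matrix (Fin d) (Fin d) ℂ) ≠ 1

def IsBiased (S : Finset G) (ε : ℝ) : Prop :=
  S.Nonempty ∧ ∀ (d : ℕ) (ρ : G →* Matrix.unitaryGroup (Fin d) ℂ),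
    IsIrred ρ → IsNontrivialRep ρ →
    opNorm ((S.card : ℂ)⁻¹ • ∑ s ∈ S, (ρ s : Matrix (Fin d) (Fin d) ℂ)) ≤ ε

def Tmat (f : G → ℂ) : Matrix G G ℂ := fun x y => f (x⁻¹ * y) / (Fintype.card G : ℂ)

set_option linter.unusedSectionVars false
set_option maxHeartbeats 1000000

lemma hsNormSq_nonneg {m n : Type*} [Fintype m] [Fintype n] (A : Matrix m n ℂ) :
    0 ≤ hsNormSq A :=
  Finset.sum_nonneg fun _ _ => Finset.sum_nonneg fun _ _ => Complex.normSq_nonneg _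

lemma normSq_sum_mul_le {n : Type*} [Fintype n] (a b : n → ℂ) :
    Complex.normSq (∑ k, a k * b k) ≤ (∑ k, Complex.normSq (a k)) * (∑ k, Complex.normSq (b k)) := by
  classical
  let x : EuclideanSpace ℂ n := WithLp.toLp 2 (fun k => star (a k))
  let y : EuclideanSpace ℂ n := WithLp.toLp 2 (fun k => b k)
  have h := norm_inner_le_norm (𝕜 := ℂ) x y
  have hinner : inner ℂ x y = ∑ k, a k * b k := by
    simp [x, y, PiLp.inner_apply, RCLike.inner_apply]
    exact Finset.sum_congr rfl fun k _ => mul_comm _ _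
  have hx : ‖x‖ ^ 2 = ∑ k, Complex.normSq (a k) := by
    rw [EuclideanSpace.norm_eq, Real.sq_sqrt (by positivity)]
    simp [x, ← Complex.sq_norm]
  have hy : ‖y‖ ^ 2 = ∑ k, Complex.normSq (b k) := by
    rw [EuclideanSpace.norm_eq, Real.sq_sqrt (by positivity)]
    simp [y, ← Complex.sq_norm]
  calc Complex.normSq (∑ k, a k * b k) = ‖(inner ℂ x y : ℂ)‖ ^ 2 := by
        rw [hinner, Complex.sq_norm]
    _ ≤ (‖x‖ * ‖y‖) ^ 2 := by
        apply sq_le_sq' <;> nlinarith [norm_nonneg (inner ℂ x y : ℂ), norm_nonneg x, norm_nonneg y]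
    _ = (∑ k, Complex.normSq (a k)) * (∑ k, Complex.normSq (b k)) := by
        rw [mul_pow, hx, hy]

lemma hsNormSq_mul_le {m n p : Type*} [Fintype m] [Fintype n] [Fintype p]
    (A : Matrix m n ℂ) (B : Matrix n p ℂ) :
    hsNormSq (A * B) ≤ hsNormSq A * hsNormSq B := by
  classical
  have h1 : hsNormSq (A * B) ≤ ∑ i, ∑ j, (∑ k, Complex.normSq (A i k)) * (∑ k, Complex.normSq (B k j)) := by
    apply Finset.sum_le_sum; intro i _
    apply Finset.sum_le_sum; intro j _
    simpa [Matrix.mul_apply] using normSq_sum_mul_le (fun k => A i k) (fun k => B k j)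
  refine h1.trans_eq ?_
  unfold hsNormSq
  rw [show (∑ k, ∑ j, Complex.normSq (B k j)) = ∑ j, ∑ k, Complex.normSq (B k j) from
    Finset.sum_comm, Finset.sum_mul_sum]

lemma conjTranspose_rho_inv {d : ℕ} (ρ : G →* Matrix.unitaryGroup (Fin d) ℂ) (g : G) :
    ((ρ g⁻¹ : Matrix (Fin d) (Fin d) ℂ))ᴴ = (ρ g : Matrix (Fin d) (Fin d) ℂ) := by
  rw [map_inv]
  show star (star ((ρ g : Matrix (Fin d) (Fin d) ℂ))) = _
  rw [star_star]

lemma mul_std_mul {d1 d2 : ℕ} (A : Matrix (Fin d1) (Fin d1) ℂ) (B : Matrix (Fin d2) (Fin d2) ℂ)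
    (p q : Fin d1) (s r : Fin d2) :
    (A * Matrix.of (fun k l => if k = q ∧ l = s then (1:ℂ) else 0) * B) p r = A p q * B s r := by
  simp [Matrix.mul_apply, ite_and, Finset.sum_ite_eq, Finset.mul_sum]

def stdE {d1 d2 : ℕ} (q : Fin d1) (s : Fin d2) : Matrix (Fin d1) (Fin d2) ℂ :=
  Matrix.of (fun k l => if k = q ∧ l = s then (1:ℂ) else 0)

lemma mul_stdE_mul {d1 d2 : ℕ} (A : Matrix (Fin d1) (Fin d1) ℂ) (B : Matrix (Fin d2) (Fin d2) ℂ)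
    (p q : Fin d1) (s r : Fin d2) :
    (A * stdE q s * B) p r = A p q * B s r := by
  simp [stdE, Matrix.mul_apply, ite_and, Finset.sum_ite_eq, Finset.mul_sum]

lemma avg_intertwine {d1 d2 : ℕ} (ρ : G →* Matrix.unitaryGroup (Fin d1) ℂ)
    (σ : G →* Matrix.unitaryGroup (Fin d2) ℂ) (M0 : Matrix (Fin d1) (Fin d2) ℂ) (g : G) :
    (ρ g : Matrix (Fin d1) (Fin d1) ℂ) * (∑ x, (ρ x : Matrix (Fin d1) (Fin d1) ℂ) * M0 * ((σ x : Matrix (Fin d2) (Fin d2) ℂ))ᴴ)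
    = (∑ x, (ρ x : Matrix (Fin d1) (Fin d1) ℂ) * M0 * ((σ x : Matrix (Fin d2) (Fin d2) ℂ))ᴴ) * (σ g : Matrix (Fin d2) (Fin d2) ℂ) := by
  rw [Matrix.mul_sum, Matrix.sum_mul]
  refine Fintype.sum_equiv (Equiv.mulLeft g) _ _ ?_
  intro x
  have h1 : (ρ (g*x) : Matrix (Fin d1) (Fin d1) ℂ) = (ρ g : Matrix (Fin d1) (Fin d1) ℂ) * (ρ x : Matrix (Fin d1) (Fin d1) ℂ) := by
    rw [_root_.map_mul]; rfl
  have h2 : ((σ (g*x) : Matrix (Fin d2) (Fin d2) ℂ))ᴴ * (σ g : Matrix (Fin d2) (Fin d2) ℂ) = ((σ x : Matrix (Fin d2) (Fin d2) ℂ))ᴴ := by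
    have h3 : (σ (g*x) : Matrix (Fin d2) (Fin d2) ℂ) = (σ g : Matrix (Fin d2) (Fin d2) ℂ) * (σ x : Matrix (Fin d2) (Fin d2) ℂ) := by
      rw [_root_.map_mul]; rfl
    have hu : ((σ g : Matrix (Fin d2) (Fin d2) ℂ))ᴴ * (σ g : Matrix (Fin d2) (Fin d2) ℂ) = 1 := by
      rw [← Matrix.star_eq_conjTranspose]; exact (σ g).2.1
    rw [h3, Matrix.conjTranspose_mul, Matrix.mul_assoc, hu, Matrix.mul_one]
  show (ρ g : Matrix (Fin d1) (Fin d1) ℂ) * ((ρ x : Matrix (Fin d1) (Fin d1) ℂ) * M0 * ((σ x : Matrix (Fin d2) (Fin d2) ℂ))ᴴ)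
      = (ρ (g*x) : Matrix (Fin d1) (Fin d1) ℂ) * M0 * ((σ (g*x) : Matrix (Fin d2) (Fin d2) ℂ))ᴴ * (σ g : Matrix (Fin d2) (Fin d2) ℂ)
  rw [h1]
  simp only [Matrix.mul_assoc]
  rw [h2]

lemma schur_cross {d1 d2 : ℕ} (ρ : G →* Matrix.unitaryGroup (Fin d1) ℂ)
    (σ : G →* Matrix.unitaryGroup (Fin d2) ℂ)
    (hd : ∀ M : Matrix (Fin d1) (Fin d2) ℂ,
      (∀ g, (ρ g : Matrix (Fin d1) (Fin d1) ℂ) * M = M * (σ g : Matrix (Fin d2) (Fin d2) ℂ)) → M = 0)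
    (p q : Fin d1) (r s : Fin d2) :
    ∑ x, (ρ x : Matrix (Fin d1) (Fin d1) ℂ) p q * star ((σ x : Matrix (Fin d2) (Fin d2) ℂ) r s) = 0 := by
  have hM := hd (∑ x, (ρ x : Matrix (Fin d1) (Fin d1) ℂ) * stdE q s * ((σ x : Matrix (Fin d2) (Fin d2) ℂ))ᴴ)
    (fun g => avg_intertwine ρ σ (stdE q s) g)
  have := congrFun (congrFun hM p) r
  simpa [Matrix.sum_apply, mul_stdE_mul, Matrix.conjTranspose_apply] using this

lemma trace_stdE {d : ℕ} (q s : Fin d) :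
    Matrix.trace (stdE q s) = if q = s then (1:ℂ) else 0 := by
  by_cases h : q = s
  · subst h; simp [stdE, Matrix.trace, Matrix.diag]
  · simp only [h, if_false]
    refine Finset.sum_eq_zero fun x _ => ?_
    simp only [stdE, Matrix.diag, Matrix.of_apply, ite_eq_right_iff]
    rintro ⟨rfl, rfl⟩; exact absurd rfl h

lemma schur_same {d : ℕ} (ρ : G →* Matrix.unitaryGroup (Fin d) ℂ) (hirr : IsIrred ρ)
    (hd : 0 < d) (p q r s : Fin d) :
    ∑ x, (ρ x : Matrix (Fin d) (Fin d) ℂ) p q * star ((ρ x : Matrix (Fin d) (Fin d) ℂ) r s)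
    = if p = r ∧ q = s then (Fintype.card G : ℂ) / d else 0 := by
  obtain ⟨c, hc⟩ := hirr (∑ x, (ρ x : Matrix (Fin d) (Fin d) ℂ) * stdE q s * ((ρ x : Matrix (Fin d) (Fin d) ℂ))ᴴ)
    (fun g => avg_intertwine ρ ρ (stdE q s) g)
  have hdC : (d : ℂ) ≠ 0 := Nat.cast_ne_zero.mpr hd.ne'
  have htr : Matrix.trace (∑ x, (ρ x : Matrix (Fin d) (Fin d) ℂ) * stdE q s * ((ρ x : Matrix (Fin d) (Fin d) ℂ))ᴴ)
      = (Fintype.card G : ℂ) * (if q = s then 1 else 0) := by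
    rw [Matrix.trace_sum]
    have hterm : ∀ x : G, Matrix.trace ((ρ x : Matrix (Fin d) (Fin d) ℂ) * stdE q s * ((ρ x : Matrix (Fin d) (Fin d) ℂ))ᴴ)
        = if q = s then (1:ℂ) else 0 := by
      intro x
      rw [Matrix.trace_mul_cycle]
      have hu : ((ρ x : Matrix (Fin d) (Fin d) ℂ))ᴴ * (ρ x : Matrix (Fin d) (Fin d) ℂ) = 1 := by
        rw [← Matrix.star_eq_conjTranspose]; exact (ρ x).2.1
      rw [hu, Matrix.one_mul, trace_stdE]
    rw [Finset.sum_congr rfl (fun x _ => hterm x)]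
    simp [Finset.card_univ, mul_comm]
  have hct : (Fintype.card G : ℂ) * (if q = s then 1 else 0) = c * d := by
    have h2 := congrArg Matrix.trace hc
    rw [htr] at h2
    rw [h2, Matrix.trace_smul, Matrix.trace_one]
    simp [mul_comm]
  have hentry := congrFun (congrFun hc p) r
  rw [Matrix.sum_apply] at hentry
  have hL : ∀ x : G, ((ρ x : Matrix (Fin d) (Fin d) ℂ) * stdE q s * ((ρ x : Matrix (Fin d) (Fin d) ℂ))ᴴ) p r
      = (ρ x : Matrix (Fin d) (Fin d) ℂ) p q * star ((ρ x : Matrix (Fin d) (Fin d) ℂ) r s) := by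
    intro x; rw [mul_stdE_mul, Matrix.conjTranspose_apply]
  rw [Finset.sum_congr rfl (fun x _ => hL x)] at hentry
  rw [hentry]
  have hone : (c • (1 : Matrix (Fin d) (Fin d) ℂ)) p r = c * (if p = r then 1 else 0) := by
    simp [Matrix.smul_apply, Matrix.one_apply]
  rw [hone]
  have hcval : c = (Fintype.card G : ℂ) * (if q = s then 1 else 0) / d := by
    field_simp [hct]
    exact hct.symm
  rw [hcval]
  by_cases h1 : p = r <;> by_cases h2 : q = s <;> simp [h1, h2]

lemma l2sq_nonneg {t : ℕ} (f : G → Matrix (Fin t) (Fin t) ℂ) : 0 ≤ l2sq f :=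
  mul_nonneg (inv_nonneg.2 (Nat.cast_nonneg _)) (Finset.sum_nonneg fun _ _ => hsNormSq_nonneg _)

lemma bessel {I : Type*} [Fintype I] {t : ℕ} (d : I → ℕ) (ρ : ∀ i, G →* Matrix.unitaryGroup (Fin (d i)) ℂ)
    (hpos : ∀ i, 0 < d i) (hirr : ∀ i, IsIrred (ρ i))
    (hdisj : ∀ i j, i ≠ j → ∀ M : Matrix (Fin (d i)) (Fin (d j)) ℂ,
      (∀ g, (ρ i g : Matrix (Fin (d i)) (Fin (d i)) ℂ) * M
          = M * (ρ j g : Matrix (Fin (d j)) (Fin (d j)) ℂ)) → M = 0)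
    (f : G → Matrix (Fin t) (Fin t) ℂ) :
    ∑ i : I, (d i : ℝ) * hsNormSq (fourierMat f (ρ i)) ≤ l2sq f := by
  classical
  set N : ℝ := (Fintype.card G : ℝ) with hNdef
  have hNpos : 0 < N := by
    rw [hNdef]; exact_mod_cast Fintype.card_pos (α := G)
  set v : (Σ i : I, Fin (d i) × Fin (d i)) → EuclideanSpace ℂ G :=
    fun k => WithLp.toLp 2 (fun x => (Real.sqrt (d k.1 / N) : ℂ) * star ((ρ k.1 x : Matrix (Fin (d k.1)) (Fin (d k.1)) ℂ) k.2.1 k.2.2)) with hvdef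
  have hinner : ∀ (i j : I) (p q : Fin (d i)) (r s : Fin (d j)),
      (inner ℂ (v ⟨i, (p, q)⟩) (v ⟨j, (r, s)⟩) : ℂ)
      = ((Real.sqrt (d i / N) * Real.sqrt (d j / N) : ℝ) : ℂ)
        * ∑ x, (ρ i x : Matrix (Fin (d i)) (Fin (d i)) ℂ) p q
              * star ((ρ j x : Matrix (Fin (d j)) (Fin (d j)) ℂ) r s) := by
    intro i j p q r s
    rw [PiLp.inner_apply, Finset.mul_sum]
    refine Finset.sum_congr rfl fun x _ => ?_
    simp only [hvdef, RCLike.inner_apply, _root_.map_mul, Complex.conj_ofReal,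
      RCLike.star_def, Complex.conj_conj, PiLp.toLp_apply]
    push_cast
    ring
  have hNne : N ≠ 0 := hNpos.ne'
  have hcardC : (Fintype.card G : ℂ) ≠ 0 := by
    exact_mod_cast Nat.cast_ne_zero.mpr (Fintype.card_pos (α := G)).ne'
  have hortho : Orthonormal ℂ v := by
    rw [orthonormal_iff_ite]
    rintro ⟨i, ⟨p, q⟩⟩ ⟨j, ⟨r, s⟩⟩
    by_cases hij : i = j
    · subst hij
      rw [hinner i i p q r s, schur_same (ρ i) (hirr i) (hpos i) p q r s]
      have hdne : ((d i : ℝ)) ≠ 0 := Nat.cast_ne_zero.mpr (hpos i).ne'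
      by_cases hpq : p = r ∧ q = s
      · obtain ⟨rfl, rfl⟩ := hpq
        simp only [if_pos (And.intro rfl rfl), if_pos rfl]
        have hsq : Real.sqrt ((d i : ℝ) / N) * Real.sqrt ((d i : ℝ) / N) = (d i : ℝ) / N :=
          Real.mul_self_sqrt (by positivity)
        rw [hsq]
        have : ((Fintype.card G : ℂ)) = (((N : ℝ)) : ℂ) := by rw [hNdef]; push_cast; ring
        rw [this]
        have hdC : ((d i : ℝ) : ℂ) ≠ 0 := by exact_mod_cast hdne
        have hNC : ((N : ℝ) : ℂ) ≠ 0 := by exact_mod_cast hNne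
        push_cast
        field_simp
        rw [if_pos ⟨trivial, trivial⟩]
        field_simp [show ((d i : ℕ) : ℂ) ≠ 0 by exact_mod_cast hdne]
      · rw [if_neg hpq, if_neg (by simp [Prod.ext_iff]; tauto), mul_zero]
    · rw [hinner i j p q r s, schur_cross (ρ i) (ρ j) (hdisj i j hij) p q r s, mul_zero]
      rw [if_neg (by simp [hij])]
  -- inner products with coordinate functions
  have hip : ∀ (i : I) (p q : Fin (d i)) (a b : Fin t),
      ‖(inner ℂ (v ⟨i, (p, q)⟩) ((WithLp.equiv 2 (G → ℂ)).symm fun x => f x a b) : ℂ)‖ ^ 2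
      = (d i : ℝ) * N * Complex.normSq (fourierMat f (ρ i) (a, p) (b, q)) := by
    intro i p q a b
    have h1 : (inner ℂ (v ⟨i, (p, q)⟩) ((WithLp.equiv 2 (G → ℂ)).symm fun x => f x a b) : ℂ)
        = ((Real.sqrt ((d i : ℝ) / N) : ℝ) : ℂ) * ((Fintype.card G : ℂ) * fourierMat f (ρ i) (a, p) (b, q)) := by
      rw [PiLp.inner_apply]
      simp only [hvdef, RCLike.inner_apply, _root_.map_mul, Complex.conj_ofReal,
        RCLike.star_def, Complex.conj_conj, WithLp.equiv_symm_apply, PiLp.toLp_apply]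
      simp only [fourierMat, Matrix.smul_apply, Matrix.sum_apply, Matrix.kroneckerMap_apply,
        smul_eq_mul]
      rw [← mul_assoc ((Fintype.card G : ℂ)), mul_inv_cancel₀ hcardC, one_mul, Finset.mul_sum]
      refine Finset.sum_congr rfl fun x _ => ?_
      ring
    rw [h1]
    rw [show ∀ z : ℂ, ‖z‖ ^ 2 = Complex.normSq z from fun z => by
      rw [Complex.sq_norm]]
    rw [Complex.normSq_mul, Complex.normSq_mul, Complex.normSq_ofReal]
    have hcast : ((Fintype.card G : ℂ)) = (((N : ℝ)) : ℂ) := by rw [hNdef]; push_cast; ring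
    rw [hcast, Complex.normSq_ofReal]
    have hsq : Real.sqrt ((d i : ℝ) / N) * Real.sqrt ((d i : ℝ) / N) = (d i : ℝ) / N :=
      Real.mul_self_sqrt (by positivity)
    rw [hsq]
    field_simp
  -- Bessel per coordinate
  have hsum : ∀ a b : Fin t,
      ∑ i : I, (d i : ℝ) * N * (∑ p, ∑ q, Complex.normSq (fourierMat f (ρ i) (a, p) (b, q)))
      ≤ ∑ x, Complex.normSq (f x a b) := by
    intro a b
    have hb := hortho.sum_inner_products_le (s := Finset.univ)
      (x := ((WithLp.equiv 2 (G → ℂ)).symm fun x => f x a b))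
    rw [← Finset.univ_sigma_univ, Finset.sum_sigma] at hb
    simp only [EuclideanSpace.norm_eq, WithLp.equiv_symm_apply, PiLp.toLp_apply] at hb
    rw [Real.sq_sqrt (Finset.sum_nonneg fun _ _ => sq_nonneg _)] at hb
    have hb2 : (∑ x, Complex.normSq (f x a b)) = ∑ x, ‖f x a b‖ ^ 2 :=
      Finset.sum_congr rfl fun x _ => by rw [Complex.sq_norm]
    rw [← hb2] at hb
    refine le_trans (le_of_eq ?_) hb
    refine Finset.sum_congr rfl fun i _ => ?_
    rw [Fintype.sum_prod_type, Finset.mul_sum]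
    refine Finset.sum_congr rfl fun p _ => ?_
    rw [Finset.mul_sum]
    refine Finset.sum_congr rfl fun q _ => ?_
    exact (hip i p q a b).symm
  -- assemble
  have hhs : ∀ i : I, hsNormSq (fourierMat f (ρ i))
      = ∑ a, ∑ b, ∑ p, ∑ q, Complex.normSq (fourierMat f (ρ i) (a, p) (b, q)) := by
    intro i
    rw [hsNormSq, Fintype.sum_prod_type]
    refine Finset.sum_congr rfl fun a _ => ?_
    rw [Finset.sum_comm, Fintype.sum_prod_type]
    refine Finset.sum_congr rfl fun b _ => ?_
    rw [Finset.sum_comm]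
  have hmain : (∑ i : I, (d i : ℝ) * hsNormSq (fourierMat f (ρ i))) * N
      ≤ ∑ x, hsNormSq (f x) := by
    have h1 : (∑ i : I, (d i : ℝ) * hsNormSq (fourierMat f (ρ i))) * N
        = ∑ a, ∑ b, ∑ i : I, (d i : ℝ) * N *
            (∑ p, ∑ q, Complex.normSq (fourierMat f (ρ i) (a, p) (b, q))) := by
      rw [Finset.sum_mul]
      have hone : ∀ i : I, ((d i : ℝ) * hsNormSq (fourierMat f (ρ i))) * N
          = ∑ a, ∑ b, (d i : ℝ) * N * (∑ p, ∑ q, Complex.normSq (fourierMat f (ρ i) (a, p) (b, q))) := by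
        intro i
        rw [hhs i, Finset.mul_sum, Finset.sum_mul]
        refine Finset.sum_congr rfl fun a _ => ?_
        rw [Finset.mul_sum, Finset.sum_mul]
        refine Finset.sum_congr rfl fun b _ => ?_
        ring
      rw [Finset.sum_congr rfl fun i _ => hone i, Finset.sum_comm]
      refine Finset.sum_congr rfl fun a _ => ?_
      rw [Finset.sum_comm]
    have h2 : ∑ x, hsNormSq (f x) = ∑ a, ∑ b, ∑ x, Complex.normSq (f x a b) := by
      simp only [hsNormSq]
      rw [Finset.sum_comm]
      refine Finset.sum_congr rfl fun a _ => ?_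
      rw [Finset.sum_comm]
    rw [h1, h2]
    exact Finset.sum_le_sum fun a _ => Finset.sum_le_sum fun b _ => hsum a b
  rw [l2sq, ← hNdef, inv_mul_eq_div, le_div_iff₀ hNpos]
  exact hmain

lemma sum_kronecker' {ι : Type*} (s : Finset ι) {l m n p : Type*}
    (A : ι → Matrix l m ℂ) (B : Matrix n p ℂ) :
    (∑ i ∈ s, A i) ⊗ₖ B = ∑ i ∈ s, (A i) ⊗ₖ B := by
  ext ⟨i, u⟩ ⟨j, w⟩
  simp [Matrix.kroneckerMap_apply, Matrix.sum_apply, Finset.sum_mul]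

lemma fourier_conv {t dd : ℕ} (f g : G → Matrix (Fin t) (Fin t) ℂ)
    (ρ : G →* Matrix.unitaryGroup (Fin dd) ℂ) :
    fourierMat (conv f g) ρ = fourierMat f ρ * fourierMat g ρ := by
  rw [fourierMat, fourierMat, fourierMat]
  simp only [conv]
  rw [Matrix.smul_mul, Matrix.mul_smul, smul_smul]
  rw [Finset.sum_congr rfl fun x (_ : x ∈ Finset.univ) =>
    Matrix.smul_kronecker ((Fintype.card G : ℂ)⁻¹) (∑ y, f (x * y⁻¹) * g y) ((ρ x : Matrix (Fin dd) (Fin dd) ℂ))]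
  rw [← Finset.smul_sum, smul_smul]
  congr 1
  rw [Matrix.sum_mul]
  have hR : ∀ x : G, (f x ⊗ₖ (ρ x : Matrix (Fin dd) (Fin dd) ℂ)) * (∑ y, g y ⊗ₖ (ρ y : Matrix (Fin dd) (Fin dd) ℂ))
      = ∑ y, (f x * g y) ⊗ₖ ((ρ x : Matrix (Fin dd) (Fin dd) ℂ) * (ρ y : Matrix (Fin dd) (Fin dd) ℂ)) := by
    intro x
    rw [Matrix.mul_sum]
    exact Finset.sum_congr rfl fun y _ => (Matrix.mul_kronecker_mul _ _ _ _).symm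
  rw [Finset.sum_congr rfl fun x _ => hR x]
  rw [Finset.sum_congr rfl fun x (_ : x ∈ Finset.univ) =>
    sum_kronecker' Finset.univ (fun y => f (x * y⁻¹) * g y) ((ρ x : Matrix (Fin dd) (Fin dd) ℂ))]
  rw [← Finset.sum_product', ← Finset.sum_product', Finset.univ_product_univ]
  refine Fintype.sum_equiv ⟨fun p => (p.1 * p.2⁻¹, p.2), fun p => (p.1 * p.2, p.2),
    fun p => by simp, fun p => by simp⟩ _ _ ?_
  rintro ⟨x, y⟩
  have h2 := _root_.map_mul ρ (x * y⁻¹) y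
  rw [inv_mul_cancel_right] at h2
  have h3 : (ρ x : Matrix (Fin dd) (Fin dd) ℂ)
      = (ρ (x * y⁻¹) : Matrix (Fin dd) (Fin dd) ℂ) * (ρ y : Matrix (Fin dd) (Fin dd) ℂ) := by
    rw [h2]; rfl
  simp only [Equiv.coe_fn_mk, h3]

theorem matrix_bnp_high_mass {G : Type*} [Group G] [Fintype G] {t : ℕ}
    {I : Type*} [Fintype I] (d : I → ℕ) (ρ : ∀ i, G →* Matrix.unitaryGroup (Fin (d i)) ℂ)
    (hpos : ∀ i, 0 < d i) (hirr : ∀ i, IsIrred (ρ i))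
    (hdisj : ∀ i j, i ≠ j → ∀ M : Matrix (Fin (d i)) (Fin (d j)) ℂ,
      (∀ g, (ρ i g : Matrix (Fin (d i)) (Fin (d i)) ℂ) * M
          = M * (ρ j g : Matrix (Fin (d j)) (Fin (d j)) ℂ)) → M = 0)
    (hcomplete : ∑ i, (d i) ^ 2 = Fintype.card G)
    (f g : G → Matrix (Fin t) (Fin t) ℂ) (D : ℕ) (hD : 1 ≤ D) :
    ∑ i ∈ Finset.univ.filter (fun i => D ≤ d i),
        (d i : ℝ) * hsNormSq (fourierMat (conv f g) (ρ i))
      ≤ (1 / (D : ℝ)) * l2sq f * l2sq g := by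
  classical
  have hBf := bessel d ρ hpos hirr hdisj f
  have hBg := bessel d ρ hpos hirr hdisj g
  have hDpos : (0:ℝ) < D := by
    have : 0 < D := hD
    exact_mod_cast this
  have hgD : ∀ i, D ≤ d i → hsNormSq (fourierMat g (ρ i)) ≤ l2sq g / D := by
    intro i hDi
    have h1 : (d i : ℝ) * hsNormSq (fourierMat g (ρ i)) ≤ l2sq g :=
      le_trans (Finset.single_le_sum (f := fun j => (d j : ℝ) * hsNormSq (fourierMat g (ρ j)))
        (fun j _ => mul_nonneg (Nat.cast_nonneg _) (hsNormSq_nonneg _)) (Finset.mem_univ i)) hBg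
    rw [le_div_iff₀ hDpos]
    calc hsNormSq (fourierMat g (ρ i)) * D
        ≤ hsNormSq (fourierMat g (ρ i)) * d i := by
          refine mul_le_mul_of_nonneg_left ?_ (hsNormSq_nonneg _)
          exact_mod_cast hDi
      _ = (d i : ℝ) * hsNormSq (fourierMat g (ρ i)) := mul_comm _ _
      _ ≤ l2sq g := h1
  calc ∑ i ∈ Finset.univ.filter (fun i => D ≤ d i),
        (d i : ℝ) * hsNormSq (fourierMat (conv f g) (ρ i))
      ≤ ∑ i ∈ Finset.univ.filter (fun i => D ≤ d i),
          (d i : ℝ) * (hsNormSq (fourierMat f (ρ i)) * (l2sq g / D)) := by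
        refine Finset.sum_le_sum fun i hi => ?_
        have hDi : D ≤ d i := (Finset.mem_filter.mp hi).2
        refine mul_le_mul_of_nonneg_left ?_ (Nat.cast_nonneg _)
        rw [fourier_conv]
        exact le_trans (hsNormSq_mul_le _ _)
          (mul_le_mul_of_nonneg_left (hgD i hDi) (hsNormSq_nonneg _))
    _ = (l2sq g / D) * ∑ i ∈ Finset.univ.filter (fun i => D ≤ d i),
          (d i : ℝ) * hsNormSq (fourierMat f (ρ i)) := by
        rw [Finset.mul_sum]; exact Finset.sum_congr rfl fun i _ => by ring
    _ ≤ (l2sq g / D) * l2sq f := by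
        refine mul_le_mul_of_nonneg_left ?_ (div_nonneg (l2sq_nonneg g) hDpos.le)
        refine le_trans (Finset.sum_le_sum_of_subset_of_nonneg (Finset.filter_subset _ _) ?_) hBf
        exact fun i _ _ => mul_nonneg (Nat.cast_nonneg _) (hsNormSq_nonneg _)
    _ = (1 / (D : ℝ)) * l2sq f * l2sq g := by ring
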